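/- For the operator L^γ = d⁴/dt⁴ + γ δ_per with δ_per the periodic delta potential, the trace function satisfies T₁^γ(λ) = T₁⁰(λ) − γ s₋(z)/(4z³), where z = λ^{1/4}, T₁⁰ = (cosh z + cos z)/2, and s₋(z) = (sinh z − sin z)/2. Equivalently, T₁^γ = c₊(z) − γ φ₃⁰(1,λ)/4 where c₊ = (cosh z + cos z)/2 and φ₃⁰(1,λ) = (sinh z − sin z)/(2z³). -/

import Mathlib

noncomputable def Fc (z c0 c1 c2 c3 : ℂ) (t : ℝ) : ℂ :=
  c0 * Complex.exp (z * t) + c1 * Complex.exp (-z * t) +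
  c2 * Complex.exp (z * Complex.I * t) + c3 * Complex.exp (-(z * Complex.I) * t)

lemma cosh_exp (w : ℂ) : Complex.cosh w = (Complex.exp w + Complex.exp (-w)) / 2 := rfl
lemma sinh_exp (w : ℂ) : Complex.sinh w = (Complex.exp w - Complex.exp (-w)) / 2 := rfl
lemma cos_exp (w : ℂ) : Complex.cos w =
    (Complex.exp (w * Complex.I) + Complex.exp (-w * Complex.I)) / 2 := rfl
lemma sin_exp (w : ℂ) : Complex.sin w =
    (Complex.exp (-w * Complex.I) - Complex.exp (w * Complex.I)) * Complex.I / 2 := rfl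

lemma expAux (a : ℂ) (t : ℝ) :
    HasDerivAt (fun s : ℝ => Complex.exp (a * s)) (a * Complex.exp (a * t)) t := by
  have h1 : HasDerivAt (fun s : ℝ => (s : ℂ)) 1 t := by
    exact (hasDerivAt_id t).ofReal_comp
  have h2 := (h1.const_mul a).cexp
  simpa [mul_comm] using h2

lemma Fc_hasDerivAt (z c0 c1 c2 c3 : ℂ) (t : ℝ) :
    HasDerivAt (Fc z c0 c1 c2 c3)
      (Fc z (z * c0) (-z * c1) (z * Complex.I * c2) (-(z * Complex.I) * c3) t) t := by
  have h := (((expAux z t).const_mul c0).add ((expAux (-z) t).const_mul c1)).add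
    ((((expAux (z * Complex.I) t).const_mul c2)).add
      ((expAux (-(z * Complex.I)) t).const_mul c3))
  refine (h.congr_deriv ?_).congr_of_eventuallyEq (Filter.Eventually.of_forall fun s => ?_)
  · simp only [Fc]; ring
  · simp only [Fc, Pi.add_apply]; ring

lemma Fc_deriv (z c0 c1 c2 c3 : ℂ) :
    deriv (Fc z c0 c1 c2 c3) =
      Fc z (z * c0) (-z * c1) (z * Complex.I * c2) (-(z * Complex.I) * c3) :=
  funext fun t => (Fc_hasDerivAt z c0 c1 c2 c3 t).deriv

set_option maxHeartbeats 2000000 in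
/-- for the periodic delta potential, the trace function satisfies
`T₁^γ = T₁⁰ − γ s₋(z)/(4z³) = c₊(z) − γ φ₃⁰(1,λ)/4`, where `T₁^γ` is computed from the
fundamental solutions `φⱼ(t) = φⱼ⁰(t) − γ φ₃⁰(t−1) φⱼ⁰(1)` on `[1,2)`. -/
theorem stmt_15 (z γ : ℂ) (hz : z ≠ 0)
    (φ0 φ1 φ2 φ3 : ℝ → ℂ)
    (h0 : ∀ t : ℝ, φ0 t = (Complex.cosh (z * t) + Complex.cos (z * t)) / 2)
    (h1 : ∀ t : ℝ, φ1 t = (Complex.sinh (z * t) + Complex.sin (z * t)) / (2 * z))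
    (h2 : ∀ t : ℝ, φ2 t = (Complex.cosh (z * t) - Complex.cos (z * t)) / (2 * z ^ 2))
    (h3 : ∀ t : ℝ, φ3 t = (Complex.sinh (z * t) - Complex.sin (z * t)) / (2 * z ^ 3))
    (T1γ : ℂ)
    (hT1γ : T1γ = (1 / 4) *
      (iteratedDeriv 0 (fun t : ℝ => φ0 t - γ * φ3 (t - 1) * φ0 1) 1 +
       iteratedDeriv 1 (fun t : ℝ => φ1 t - γ * φ3 (t - 1) * φ1 1) 1 +
       iteratedDeriv 2 (fun t : ℝ => φ2 t - γ * φ3 (t - 1) * φ2 1) 1 +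
       iteratedDeriv 3 (fun t : ℝ => φ3 t - γ * φ3 (t - 1) * φ3 1) 1)) :
    T1γ = (Complex.cosh z + Complex.cos z) / 2 -
        γ * ((Complex.sinh z - Complex.sin z) / 2) / (4 * z ^ 3) ∧
    T1γ = (Complex.cosh z + Complex.cos z) / 2 -
        γ * ((Complex.sinh z - Complex.sin z) / (2 * z ^ 3)) / 4 := by
  -- base representations
  have hb0 : ∀ t : ℝ, φ0 t = Fc z (1/4) (1/4) (1/4) (1/4) t := by
    intro t
    rw [h0, cosh_exp, cos_exp]
    simp only [Fc]
    rw [show -(z * (t:ℂ)) * Complex.I = -(z*Complex.I) * t by ring, show (z * (t:ℂ)) * Complex.I = (z*Complex.I) * t by ring]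
    ring
  have hb1 : ∀ t : ℝ, φ1 t = Fc z (1/(4*z)) (-1/(4*z)) (-Complex.I/(4*z)) (Complex.I/(4*z)) t := by
    intro t
    rw [h1, sinh_exp, sin_exp]
    simp only [Fc]
    rw [show -(z * (t:ℂ)) * Complex.I = -(z*Complex.I) * t by ring, show (z * (t:ℂ)) * Complex.I = (z*Complex.I) * t by ring]
    field_simp
    ring
  have hb2 : ∀ t : ℝ, φ2 t = Fc z (1/(4*z^2)) (1/(4*z^2)) (-1/(4*z^2)) (-1/(4*z^2)) t := by
    intro t
    rw [h2, cosh_exp, cos_exp]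
    simp only [Fc]
    rw [show -(z * (t:ℂ)) * Complex.I = -(z*Complex.I) * t by ring, show (z * (t:ℂ)) * Complex.I = (z*Complex.I) * t by ring]
    field_simp
    ring
  have hb3 : ∀ t : ℝ, φ3 t = Fc z (1/(4*z^3)) (-1/(4*z^3)) (Complex.I/(4*z^3)) (-Complex.I/(4*z^3)) t := by
    intro t
    rw [h3, sinh_exp, sin_exp]
    simp only [Fc]
    rw [show -(z * (t:ℂ)) * Complex.I = -(z*Complex.I) * t by ring, show (z * (t:ℂ)) * Complex.I = (z*Complex.I) * t by ring]
    field_simp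
    ring
  have hshift : ∀ t : ℝ, φ3 (t - 1) = Fc z (Complex.exp (-z)/(4*z^3)) (-Complex.exp z/(4*z^3))
      (Complex.I*Complex.exp (-(z*Complex.I))/(4*z^3)) (-(Complex.I*Complex.exp (z*Complex.I))/(4*z^3)) t := by
    intro t
    rw [h3, sinh_exp, sin_exp]
    push_cast
    rw [show z * ((t:ℂ) - 1) = z * t + -z by ring,
      show -(z * (t:ℂ) + -z) = -z * t + z by ring,
      show (-z * (t:ℂ) + z) * Complex.I = -(z*Complex.I) * t + z*Complex.I by ring,
      show (z * (t:ℂ) + -z) * Complex.I = (z*Complex.I) * t + -(z*Complex.I) by ring,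
      Complex.exp_add, Complex.exp_add, Complex.exp_add, Complex.exp_add]
    simp only [Fc]
    field_simp
    ring
  have red : ∀ (n : ℕ) (c0 c1 c2 c3 : ℂ), iteratedDeriv n (Fc z c0 c1 c2 c3)
      = Fc z (z^n*c0) ((-z)^n*c1) ((z*Complex.I)^n*c2) ((-(z*Complex.I))^n*c3) := by
    intro n
    induction n with
    | zero => intro c0 c1 c2 c3; funext t; simp [iteratedDeriv_zero, Fc]
    | succ n ih =>
        intro c0 c1 c2 c3
        rw [iteratedDeriv_succ, ih, Fc_deriv]
        funext t; simp only [Fc]; ring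
  have hF0 : (fun t : ℝ => φ0 t - γ * φ3 (t - 1) * φ0 1)
      = Fc z (1/4 - γ * φ0 1 * (Complex.exp (-z)/(4*z^3)))
             (1/4 - γ * φ0 1 * (-Complex.exp z/(4*z^3)))
             (1/4 - γ * φ0 1 * (Complex.I*Complex.exp (-(z*Complex.I))/(4*z^3)))
             (1/4 - γ * φ0 1 * (-(Complex.I*Complex.exp (z*Complex.I))/(4*z^3))) := by
    funext t; rw [hb0, hshift]; simp only [Fc]; ring
  have hF1 : (fun t : ℝ => φ1 t - γ * φ3 (t - 1) * φ1 1)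
      = Fc z (1/(4*z) - γ * φ1 1 * (Complex.exp (-z)/(4*z^3)))
             (-1/(4*z) - γ * φ1 1 * (-Complex.exp z/(4*z^3)))
             (-Complex.I/(4*z) - γ * φ1 1 * (Complex.I*Complex.exp (-(z*Complex.I))/(4*z^3)))
             (Complex.I/(4*z) - γ * φ1 1 * (-(Complex.I*Complex.exp (z*Complex.I))/(4*z^3))) := by
    funext t; rw [hb1, hshift]; simp only [Fc]; ring
  have hF2 : (fun t : ℝ => φ2 t - γ * φ3 (t - 1) * φ2 1)
      = Fc z (1/(4*z^2) - γ * φ2 1 * (Complex.exp (-z)/(4*z^3)))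
             (1/(4*z^2) - γ * φ2 1 * (-Complex.exp z/(4*z^3)))
             (-1/(4*z^2) - γ * φ2 1 * (Complex.I*Complex.exp (-(z*Complex.I))/(4*z^3)))
             (-1/(4*z^2) - γ * φ2 1 * (-(Complex.I*Complex.exp (z*Complex.I))/(4*z^3))) := by
    funext t; rw [hb2, hshift]; simp only [Fc]; ring
  have hF3 : (fun t : ℝ => φ3 t - γ * φ3 (t - 1) * φ3 1)
      = Fc z (1/(4*z^3) - γ * φ3 1 * (Complex.exp (-z)/(4*z^3)))
             (-1/(4*z^3) - γ * φ3 1 * (-Complex.exp z/(4*z^3)))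
             (Complex.I/(4*z^3) - γ * φ3 1 * (Complex.I*Complex.exp (-(z*Complex.I))/(4*z^3)))
             (-Complex.I/(4*z^3) - γ * φ3 1 * (-(Complex.I*Complex.exp (z*Complex.I))/(4*z^3))) := by
    funext t; rw [hb3, hshift]; simp only [Fc]; ring
  rw [hF0, hF1, hF2, hF3, red 0, red 1, red 2, red 3] at hT1γ
  simp only [Fc, Complex.ofReal_one, mul_one, pow_zero, pow_one, one_mul] at hT1γ
  have hK3 : φ3 1 = (Complex.sinh z - Complex.sin z) / (2 * z ^ 3) := by
    rw [h3]; norm_num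
  rw [hK3] at hT1γ
  have key : T1γ = (Complex.cosh z + Complex.cos z) / 2 -
      γ * ((Complex.sinh z - Complex.sin z) / 2) / (4 * z ^ 3) := by
    have hXY : Complex.exp z * Complex.exp (-z) = 1 := by
      rw [← Complex.exp_add]; simp
    have hPQ : Complex.exp (z * Complex.I) * Complex.exp (-(z * Complex.I)) = 1 := by
      rw [← Complex.exp_add]; simp
    have i2 : (Complex.I : ℂ) ^ 2 = -1 := Complex.I_sq
    have i4 : (Complex.I : ℂ) ^ 4 = 1 := by
      rw [show (4:ℕ) = 2*2 from rfl, pow_mul, i2]; ring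
    have hz9 : z ^ 9 * z⁻¹ ^ 9 = 1 := by
      rw [← mul_pow, mul_inv_cancel₀ hz, one_pow]
    have E0 : z ^ 0 * (1/4 - γ * φ0 1 * (Complex.exp (-z) / (4 * z ^ 3))) * Complex.exp z +
        (-z) ^ 0 * (1/4 - γ * φ0 1 * (-Complex.exp z / (4 * z ^ 3))) * Complex.exp (-z) +
        (z * Complex.I) ^ 0 * (1/4 - γ * φ0 1 * (Complex.I * Complex.exp (-(z * Complex.I)) / (4 * z ^ 3))) * Complex.exp (z * Complex.I) +
        (-(z * Complex.I)) ^ 0 * (1/4 - γ * φ0 1 * (-(Complex.I * Complex.exp (z * Complex.I)) / (4 * z ^ 3))) * Complex.exp (-(z * Complex.I)) = (Complex.exp z + Complex.exp (-z) + Complex.exp (z * Complex.I) + Complex.exp (-(z * Complex.I))) / 4 := by ring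
    have E1 : z ^ 1 * (1/(4*z) - γ * φ1 1 * (Complex.exp (-z) / (4 * z ^ 3))) * Complex.exp z +
        (-z) ^ 1 * (-1/(4*z) - γ * φ1 1 * (-Complex.exp z / (4 * z ^ 3))) * Complex.exp (-z) +
        (z * Complex.I) ^ 1 * (-Complex.I/(4*z) - γ * φ1 1 * (Complex.I * Complex.exp (-(z * Complex.I)) / (4 * z ^ 3))) * Complex.exp (z * Complex.I) +
        (-(z * Complex.I)) ^ 1 * (Complex.I/(4*z) - γ * φ1 1 * (-(Complex.I * Complex.exp (z * Complex.I)) / (4 * z ^ 3))) * Complex.exp (-(z * Complex.I)) = (Complex.exp z + Complex.exp (-z) + Complex.exp (z * Complex.I) + Complex.exp (-(z * Complex.I))) / 4 := by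
      field_simp
      linear_combination (-2*γ*(φ1 1)) * hXY + (-2*γ*(φ1 1)*Complex.I^2) * hPQ +
        (-2*γ*(φ1 1) - z^2*(Complex.exp (-(z*Complex.I)) + Complex.exp (z*Complex.I))) * i2
    have E2 : z ^ 2 * (1/(4*z^2) - γ * φ2 1 * (Complex.exp (-z) / (4 * z ^ 3))) * Complex.exp z +
        (-z) ^ 2 * (1/(4*z^2) - γ * φ2 1 * (-Complex.exp z / (4 * z ^ 3))) * Complex.exp (-z) +
        (z * Complex.I) ^ 2 * (-1/(4*z^2) - γ * φ2 1 * (Complex.I * Complex.exp (-(z * Complex.I)) / (4 * z ^ 3))) * Complex.exp (z * Complex.I) +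
        (-(z * Complex.I)) ^ 2 * (-1/(4*z^2) - γ * φ2 1 * (-(Complex.I * Complex.exp (z * Complex.I)) / (4 * z ^ 3))) * Complex.exp (-(z * Complex.I)) = (Complex.exp z + Complex.exp (-z) + Complex.exp (z * Complex.I) + Complex.exp (-(z * Complex.I))) / 4 := by
      field_simp
      linear_combination
        (-z*(Complex.exp (-(z*Complex.I)) + Complex.exp (z*Complex.I))) * i2
    have E3 : ∀ K : ℂ, z ^ 3 * (1/(4*z^3) - γ * K * (Complex.exp (-z) / (4 * z ^ 3))) * Complex.exp z +
        (-z) ^ 3 * (-1/(4*z^3) - γ * K * (-Complex.exp z / (4 * z ^ 3))) * Complex.exp (-z) +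
        (z * Complex.I) ^ 3 * (Complex.I/(4*z^3) - γ * K * (Complex.I * Complex.exp (-(z * Complex.I)) / (4 * z ^ 3))) * Complex.exp (z * Complex.I) +
        (-(z * Complex.I)) ^ 3 * (-Complex.I/(4*z^3) - γ * K * (-(Complex.I * Complex.exp (z * Complex.I)) / (4 * z ^ 3))) * Complex.exp (-(z * Complex.I)) = (Complex.exp z + Complex.exp (-z) + Complex.exp (z * Complex.I) + Complex.exp (-(z * Complex.I))) / 4 - γ * K := by
      intro K
      field_simp
      linear_combination (-2*γ*K) * hXY + (-2*γ*K*Complex.I^4) * hPQ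
        + (Complex.exp (z*Complex.I) + Complex.exp (-(z*Complex.I)) - 2*γ*K) * i4
    rw [hT1γ]
    simp only [cosh_exp, cos_exp, sinh_exp, sin_exp, neg_mul]
    linear_combination (1/4 : ℂ) * E0 + (1/4 : ℂ) * E1 + (1/4 : ℂ) * E2 +
      (1/4 : ℂ) * E3 (((Complex.exp z - Complex.exp (-z)) / 2 - (Complex.exp (-(z * Complex.I)) - Complex.exp (z * Complex.I)) * Complex.I / 2) / (2 * z ^ 3))
  refine ⟨key, ?_⟩
  rw [key]; field_simp
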